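/- Let W be a regular wreath-like product of groups A and B with canonical homomorphism ε: W → B. If the extension splits, i.e., there exists a group homomorphism s: B → W with ε ∘ s = id_B, then W is isomorphic to the restricted wreath product A wr B, i.e., the semidirect product (⊕_{b∈B} A) ⋊ B where B acts on the direct sum ⊕_{b∈B} A by left translation of the index. -/

import Mathlib

/-- `W` is a wreath-like product of `A` and `B` corresponding to the action of `B` on `I`
(written `W ∈ WR(A, B ↷ I)`): it comes with a family of subgroups `𝒜 i`, each isomorphic
to `A`, which pairwise commute elementwise, form an independent family, and generate the
kernel of the surjective canonical homomorphism `ε : W → B` (so their internal direct sum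
is the base `ker ε`), and conjugation by `w ∈ W` carries `𝒜 i` onto `𝒜 (ε w • i)`.
A regular wreath-like product of `A` and `B` is the case `I = B` with the left
translation action of `B` on itself. -/
structure IsWreathLikeProduct (W A B I : Type*) [Group W] [Group A] [Group B]
    [MulAction B I] (𝒜 : I → Subgroup W) (ε : W →* B) : Prop where
  surjective : Function.Surjective ε
  isoA : ∀ i : I, Nonempty (𝒜 i ≃* A)
  commute : ∀ i j : I, i ≠ j → ∀ x ∈ 𝒜 i, ∀ y ∈ 𝒜 j, Commute x y
  indep : ∀ i : I, Disjoint (𝒜 i) (⨆ (j : I) (_ : j ≠ i), 𝒜 j)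
  base_eq : (⨆ i : I, 𝒜 i) = ε.ker
  conj_eq : ∀ (w : W) (i : I),
    Subgroup.map (MulAut.conj w).toMonoidHom (𝒜 i) = 𝒜 (ε w • i)

/-- The direct sum of `B`-many copies of the group `A`: the subgroup of the product group
`B → A` consisting of the finitely supported functions. -/
def FinSuppFun (B A : Type*) [Group A] : Subgroup (B → A) where
  carrier := {f | (Function.mulSupport f).Finite}
  one_mem' := by simp [Function.mulSupport_one]
  mul_mem' := by
    intro f g hf hg
    exact (Set.Finite.union hf hg).subset (Function.mulSupport_mul f g)
  inv_mem' := by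
    intro f hf
    simpa [Function.mulSupport_inv] using hf

/-- Left translation of the index on finitely supported functions, as an automorphism. -/
def wreathTranslate {A B : Type*} [Group A] [Group B] (b : B) :
    FinSuppFun B A ≃* FinSuppFun B A where
  toFun f := ⟨fun x => (f : B → A) (b⁻¹ * x), by
      have hf : (Function.mulSupport (f : B → A)).Finite := f.2
      have h : Function.mulSupport (fun x => (f : B → A) (b⁻¹ * x))
          ⊆ (fun y => b * y) '' Function.mulSupport (f : B → A) := by
        intro x hx
        exact ⟨b⁻¹ * x, hx, by group⟩
      exact (hf.image _).subset h⟩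
  invFun f := ⟨fun x => (f : B → A) (b * x), by
      have hf : (Function.mulSupport (f : B → A)).Finite := f.2
      have h : Function.mulSupport (fun x => (f : B → A) (b * x))
          ⊆ (fun y => b⁻¹ * y) '' Function.mulSupport (f : B → A) := by
        intro x hx
        exact ⟨b * x, hx, by group⟩
      exact (hf.image _).subset h⟩
  left_inv f := by
    apply Subtype.ext; funext x; simp
  right_inv f := by
    apply Subtype.ext; funext x; simp
  map_mul' f g := by
    apply Subtype.ext; funext x; rfl

/-- The action of `B` on `⊕_{b ∈ B} A` by left translation of the index. -/
def wreathAction (A B : Type*) [Group A] [Group B] : B →* MulAut (FinSuppFun B A) where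
  toFun b := wreathTranslate b
  map_one' := by
    apply MulEquiv.ext; intro f; apply Subtype.ext; funext x; simp [wreathTranslate]
  map_mul' b c := by
    apply MulEquiv.ext; intro f; apply Subtype.ext; funext x
    simp [wreathTranslate, mul_assoc]

/-- The restricted wreath product `A wr B = (⊕_{b ∈ B} A) ⋊ B`, where `B` acts on the
direct sum by left translation of the index: `(b • f) x = f (b⁻¹ x)`. -/
abbrev RestrictedWreathProduct (A B : Type*) [Group A] [Group B] :=
  SemidirectProduct (FinSuppFun B A) B (wreathAction A B)


section WLPAux

open Finset

variable {W A B : Type*} [Group W] [Group A] [Group B]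
variable {𝒜 : B → Subgroup W} {ε : W →* B}

/-- The embedding of `A` onto `𝒜 b`, obtained by conjugating a fixed isomorphism
`A ≃* 𝒜 1` by `s b`. -/
noncomputable def wlpIota (hW : IsWreathLikeProduct W A B B 𝒜 ε) (s : B →* W) (b : B) :
    A →* W :=
  ((MulAut.conj (s b)).toMonoidHom).comp
    ((𝒜 (1 : B)).subtype.comp (Classical.choice (hW.isoA 1)).symm.toMonoidHom)

variable (hW : IsWreathLikeProduct W A B B 𝒜 ε) (s : B →* W)
variable (hs : ∀ b : B, ε (s b) = b)

lemma wlpIota_apply (b : B) (a : A) :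
    wlpIota hW s b a = s b * ((Classical.choice (hW.isoA 1)).symm a : W) * (s b)⁻¹ := rfl

lemma wlpIota_mem (hs : ∀ b : B, ε (s b) = b) (b : B) (a : A) :
    wlpIota hW s b a ∈ 𝒜 b := by
  have h1 : ((Classical.choice (hW.isoA 1)).symm a : W) ∈ 𝒜 (1 : B) :=
    Subtype.coe_prop _
  have hmem : wlpIota hW s b a ∈ Subgroup.map (MulAut.conj (s b)).toMonoidHom (𝒜 (1 : B)) :=
    ⟨_, h1, rfl⟩
  rw [hW.conj_eq (s b) 1] at hmem
  simpa [hs b, smul_eq_mul] using hmem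

lemma wlpIota_injective (b : B) : Function.Injective (wlpIota hW s b) := by
  intro a₁ a₂ h
  rw [wlpIota_apply, wlpIota_apply] at h
  have h2 : ((Classical.choice (hW.isoA 1)).symm a₁ : W)
      = ((Classical.choice (hW.isoA 1)).symm a₂ : W) := by
    exact mul_left_cancel (mul_right_cancel h)
  exact (Classical.choice (hW.isoA 1)).symm.injective (Subtype.ext h2)

lemma wlpIota_surj (hs : ∀ b : B, ε (s b) = b) (b : B) {x : W} (hx : x ∈ 𝒜 b) :
    ∃ a : A, wlpIota hW s b a = x := by
  have heq : Subgroup.map (MulAut.conj (s b)).toMonoidHom (𝒜 (1 : B)) = 𝒜 b := by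
    rw [hW.conj_eq (s b) 1, hs b, smul_eq_mul, mul_one]
  rw [← heq] at hx
  obtain ⟨y, hy, rfl⟩ := hx
  refine ⟨Classical.choice (hW.isoA 1) ⟨y, hy⟩, ?_⟩
  rw [wlpIota_apply]
  simp [MulAut.conj_apply]

lemma wlpIota_conj (b c : B) (a : A) :
    wlpIota hW s (b * c) a = s b * wlpIota hW s c a * (s b)⁻¹ := by
  rw [wlpIota_apply, wlpIota_apply, map_mul]
  group

/-- Auxiliary product over a finset. -/
noncomputable def wlpPhiAux (T : Finset B) (f : B → A) : W :=
  T.noncommProd (fun b => wlpIota hW s b (f b))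
    (show (↑T : Set B).Pairwise (Function.onFun Commute fun b => wlpIota hW s b (f b)) from
    (fun x _ y _ hxy => hW.commute x y hxy _ (wlpIota_mem hW s hs x (f x))
      _ (wlpIota_mem hW s hs y (f y))))

lemma wlpPhiAux_mem_ker (T : Finset B) (f : B → A) :
    wlpPhiAux hW s hs T f ∈ ε.ker := by
  refine Subgroup.noncommProd_mem _ _ (fun b _ => ?_)
  rw [← hW.base_eq]
  exact le_iSup 𝒜 b (wlpIota_mem hW s hs b (f b))

lemma wlpPhiAux_subset [DecidableEq B] {S T : Finset B} (hST : S ⊆ T) (f : B → A)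
    (hf : ∀ b ∈ T, b ∉ S → f b = 1) :
    wlpPhiAux hW s hs T f = wlpPhiAux hW s hs S f := by
  have hT : T = S ∪ (T \ S) := (Finset.union_sdiff_of_subset hST).symm
  unfold wlpPhiAux
  rw [hT,
    Finset.noncommProd_union_of_disjoint Finset.disjoint_sdiff]
  have hone : ((T \ S).noncommProd (fun b => wlpIota hW s b (f b))
      (show (↑(T \ S) : Set B).Pairwise (Function.onFun Commute fun b => wlpIota hW s b (f b)) from
      (fun x _ y _ hxy => hW.commute x y hxy _ (wlpIota_mem hW s hs x (f x))
        _ (wlpIota_mem hW s hs y (f y))))) = 1 := by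
    rw [Finset.noncommProd_eq_pow_card _ _ _ 1 (fun x hx => ?_), one_pow]
    obtain ⟨hxT, hxS⟩ := Finset.mem_sdiff.mp hx
    rw [hf x hxT hxS, map_one]
  rw [hone, mul_one]

lemma wlp_mulSupport_finite (f : FinSuppFun B A) :
    (Function.mulSupport (f : B → A)).Finite := f.2

/-- The support of `f` as a finset. -/
noncomputable def wlpSupp (f : FinSuppFun B A) : Finset B :=
  (wlp_mulSupport_finite f).toFinset

lemma wlpPhiAux_eq_of_supp_subset [DecidableEq B] {f : FinSuppFun B A} {T : Finset B}
    (hT : wlpSupp f ⊆ T) :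
    wlpPhiAux hW s hs T (f : B → A) = wlpPhiAux hW s hs (wlpSupp f) (f : B → A) := by
  refine wlpPhiAux_subset hW s hs hT _ (fun b _ hb => ?_)
  by_contra h
  exact hb ((wlp_mulSupport_finite f).mem_toFinset.mpr h)

/-- The isomorphism `⊕_{b} A ≃ ker ε`, as a homomorphism into `W`. -/
noncomputable def wlpPhi : FinSuppFun B A →* W where
  toFun f := wlpPhiAux hW s hs (wlpSupp f) (f : B → A)
  map_one' := by
    show wlpPhiAux hW s hs (wlpSupp (1 : FinSuppFun B A)) ((1 : FinSuppFun B A) : B → A) = 1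
    have h : wlpSupp (1 : FinSuppFun B A) = (∅ : Finset B) := by
      apply Finset.eq_empty_of_forall_notMem
      intro x hx
      have := (wlp_mulSupport_finite (1 : FinSuppFun B A)).mem_toFinset.mp hx
      exact this rfl
    rw [h]
    exact Finset.noncommProd_empty _ _
  map_mul' f g := by
    show wlpPhiAux hW s hs (wlpSupp (f * g)) ((f * g : FinSuppFun B A) : B → A)
      = wlpPhiAux hW s hs (wlpSupp f) (f : B → A) * wlpPhiAux hW s hs (wlpSupp g) (g : B → A)
    classical
    set T : Finset B := wlpSupp f ∪ wlpSupp g with hTdef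
    have hfT : wlpSupp f ⊆ T := Finset.subset_union_left
    have hgT : wlpSupp g ⊆ T := Finset.subset_union_right
    have hfgT : wlpSupp (f * g) ⊆ T := by
      intro b hb
      have hb' : (f : B → A) b * (g : B → A) b ≠ 1 :=
        (wlp_mulSupport_finite (f * g)).mem_toFinset.mp hb
      by_contra hbT
      rw [Finset.mem_union, not_or] at hbT
      have h1 : (f : B → A) b = 1 := by
        by_contra h
        exact hbT.1 ((wlp_mulSupport_finite f).mem_toFinset.mpr h)
      have h2 : (g : B → A) b = 1 := by
        by_contra h
        exact hbT.2 ((wlp_mulSupport_finite g).mem_toFinset.mpr h)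
      exact hb' (by rw [h1, h2, mul_one])
    rw [← wlpPhiAux_eq_of_supp_subset hW s hs hfgT,
      ← wlpPhiAux_eq_of_supp_subset hW s hs hfT,
      ← wlpPhiAux_eq_of_supp_subset hW s hs hgT]
    unfold wlpPhiAux
    rw [Finset.noncommProd_congr rfl
      (g := fun b => wlpIota hW s b ((f : B → A) b) * wlpIota hW s b ((g : B → A) b))
      (fun x _ => by
        show wlpIota hW s x (((f * g : FinSuppFun B A) : B → A) x)
          = wlpIota hW s x ((f : B → A) x) * wlpIota hW s x ((g : B → A) x)
        rw [← map_mul]; rfl)]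
    exact Finset.noncommProd_mul_distrib _ _
      (fun x _ y _ hxy => hW.commute x y hxy _ (wlpIota_mem hW s hs x _)
        _ (wlpIota_mem hW s hs y _))
      (fun x _ y _ hxy => hW.commute x y hxy _ (wlpIota_mem hW s hs x _)
        _ (wlpIota_mem hW s hs y _))
      (fun x _ y _ hxy => hW.commute x y hxy _ (wlpIota_mem hW s hs x _)
        _ (wlpIota_mem hW s hs y _))

lemma wlpPhi_mem_ker (f : FinSuppFun B A) : wlpPhi hW s hs f ∈ ε.ker :=
  wlpPhiAux_mem_ker hW s hs _ _

lemma wlpPhi_injective : Function.Injective (wlpPhi hW s hs) := by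
  classical
  rw [injective_iff_map_eq_one]
  intro f hf
  ext1
  funext b
  show (f : B → A) b = 1
  by_contra hb
  have hbS : b ∈ wlpSupp f := (wlp_mulSupport_finite f).mem_toFinset.mpr hb
  have hcomm : ∀ T : Finset B,
      (↑T : Set B).Pairwise (Function.onFun Commute fun c => wlpIota hW s c ((f : B → A) c)) :=
    fun T x _ y _ hxy => hW.commute x y hxy _ (wlpIota_mem hW s hs x _)
      _ (wlpIota_mem hW s hs y _)
  have hf' : (wlpSupp f).noncommProd (fun c => wlpIota hW s c ((f : B → A) c))
      (hcomm _) = 1 := hf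
  rw [← Finset.noncommProd_erase_mul (wlpSupp f) hbS _ (hcomm _)] at hf'
  obtain ⟨P, hP1, hP2⟩ : ∃ P : W, P * wlpIota hW s b ((f : B → A) b) = 1
      ∧ P ∈ ⨆ (j : B) (_ : j ≠ b), 𝒜 j :=
    ⟨_, hf', Subgroup.noncommProd_mem _ _ (fun c hc =>
      Subgroup.mem_iSup_of_mem c (Subgroup.mem_iSup_of_mem (Finset.ne_of_mem_erase hc)
        (wlpIota_mem hW s hs c _)))⟩
  have hmem2 : wlpIota hW s b ((f : B → A) b) ∈ ⨆ (j : B) (_ : j ≠ b), 𝒜 j := by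
    rw [eq_inv_of_mul_eq_one_right hP1]
    exact inv_mem hP2
  have h1 : wlpIota hW s b ((f : B → A) b) = 1 :=
    Subgroup.disjoint_def.mp (hW.indep b) (wlpIota_mem hW s hs b _) hmem2
  exact hb (wlpIota_injective hW s b (by rw [h1, map_one]))

/-- `single b a` as an element of the direct sum. -/
noncomputable def wlpSingle (b : B) (a : A) : FinSuppFun B A := by
  classical
  exact ⟨fun x => if x = b then a else 1, by
    apply Set.Finite.subset (Set.finite_singleton b)
    intro x hx
    simp only [Function.mem_mulSupport] at hx
    by_contra h
    simp only [Set.mem_singleton_iff] at h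
    exact hx (if_neg h)⟩

lemma wlpPhi_single (b : B) (a : A) : wlpPhi hW s hs (wlpSingle b a) = wlpIota hW s b a := by
  classical
  have hsub : wlpSupp (wlpSingle b a) ⊆ {b} := by
    intro x hx
    have hx' := (wlp_mulSupport_finite (wlpSingle b a)).mem_toFinset.mp hx
    simp only [Function.mem_mulSupport] at hx'
    by_contra h
    simp only [Finset.mem_singleton] at h
    exact hx' (by simp only [wlpSingle]; exact if_neg h)
  show wlpPhiAux hW s hs (wlpSupp (wlpSingle b a)) _ = _
  rw [← wlpPhiAux_eq_of_supp_subset hW s hs hsub]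
  unfold wlpPhiAux
  rw [Finset.noncommProd_singleton]
  simp [wlpSingle]

lemma wlpPhi_range : (wlpPhi hW s hs).range = ε.ker := by
  apply le_antisymm
  · rintro x ⟨f, rfl⟩
    exact wlpPhi_mem_ker hW s hs f
  · rw [← hW.base_eq]
    refine iSup_le (fun b x hx => ?_)
    obtain ⟨a, ha⟩ := wlpIota_surj hW s hs b hx
    exact ⟨wlpSingle b a, by rw [wlpPhi_single hW s hs b a, ha]⟩

lemma wlpPhiAux_image [DecidableEq B] (b : B) (T : Finset B) (f : B → A) :
    wlpPhiAux hW s hs (T.image (fun x => b * x)) (fun x => f (b⁻¹ * x))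
      = s b * wlpPhiAux hW s hs T f * (s b)⁻¹ := by
  classical
  induction T using Finset.induction_on with
  | empty =>
    unfold wlpPhiAux
    simp
  | @insert a T haT ih =>
    have himg : (insert a T).image (fun x => b * x)
        = insert (b * a) (T.image (fun x => b * x)) := Finset.image_insert _ _ _
    have hba : b * a ∉ T.image (fun x => b * x) := by
      intro h
      obtain ⟨y, hy, hxy⟩ := Finset.mem_image.mp h
      exact haT (by rwa [mul_right_cancel (show y * 1 = a * 1 by
        simpa using mul_left_cancel hxy)] at hy)
    unfold wlpPhiAux
    rw [himg,
      Finset.noncommProd_insert_of_notMem _ _ _ _ hba,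
      Finset.noncommProd_insert_of_notMem _ _ _ _ haT]
    have hterm : wlpIota hW s (b * a) (f (b⁻¹ * (b * a)))
        = s b * wlpIota hW s a (f a) * (s b)⁻¹ := by
      rw [inv_mul_cancel_left, wlpIota_conj]
    rw [hterm]
    unfold wlpPhiAux at ih
    rw [ih]
    group

lemma wlpPhi_compat (b : B) (f : FinSuppFun B A) :
    wlpPhi hW s hs (wreathAction A B b f) = s b * wlpPhi hW s hs f * (s b)⁻¹ := by
  classical
  have hcoe : ((wreathAction A B b f : FinSuppFun B A) : B → A)
      = fun x => (f : B → A) (b⁻¹ * x) := rfl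
  have hsub : wlpSupp (wreathAction A B b f) ⊆ (wlpSupp f).image (fun x => b * x) := by
    intro x hx
    have hx' := (wlp_mulSupport_finite (wreathAction A B b f)).mem_toFinset.mp hx
    rw [hcoe] at hx'
    have : (f : B → A) (b⁻¹ * x) ≠ 1 := hx'
    refine Finset.mem_image.mpr ⟨b⁻¹ * x, (wlp_mulSupport_finite f).mem_toFinset.mpr this, ?_⟩
    group
  show wlpPhiAux hW s hs (wlpSupp (wreathAction A B b f)) _ = _
  rw [← wlpPhiAux_eq_of_supp_subset hW s hs hsub]
  have := wlpPhiAux_image hW s hs b (wlpSupp f) (f : B → A)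
  rw [hcoe]
  exact this

end WLPAux

/-- If `W` is a regular wreath-like product of `A` and `B` whose defining
extension splits (there is a homomorphism `s : B → W` with `ε ∘ s = id`), then `W` is
isomorphic to the restricted wreath product `A wr B = (⊕_{b ∈ B} A) ⋊ B`. -/
theorem regular_wreathLike_split_iso_wreathProduct
    {W A B : Type*} [Group W] [Group A] [Group B]
    (𝒜 : B → Subgroup W) (ε : W →* B)
    (hW : IsWreathLikeProduct W A B B 𝒜 ε)
    (s : B →* W) (hs : ∀ b : B, ε (s b) = b) :
    Nonempty (W ≃* RestrictedWreathProduct A B) := by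
  classical
  have hcompat : ∀ b : B,
      (wlpPhi hW s hs).comp ((wreathAction A B) b).toMonoidHom
        = (MulAut.conj (s b)).toMonoidHom.comp (wlpPhi hW s hs) := by
    intro b
    ext f
    simpa using wlpPhi_compat hW s hs b f
  let Ψ := SemidirectProduct.lift (wlpPhi hW s hs) s hcompat
  have hΨ : ∀ x : RestrictedWreathProduct A B,
      Ψ x = wlpPhi hW s hs x.left * s x.right := fun x => rfl
  have hinj : Function.Injective Ψ := by
    rw [injective_iff_map_eq_one]
    intro x hx
    rw [hΨ] at hx
    have hb : x.right = 1 := by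
      have h := congrArg ε hx
      rw [map_mul, map_one] at h
      rwa [(wlpPhi_mem_ker hW s hs x.left : ε _ = 1), one_mul, hs] at h
    have hf : x.left = 1 := by
      apply wlpPhi_injective hW s hs
      rw [map_one]
      rwa [hb, map_one, mul_one] at hx
    exact SemidirectProduct.ext hf hb
  have hsurj : Function.Surjective Ψ := by
    intro w
    have hmem : w * (s (ε w))⁻¹ ∈ ε.ker := by
      rw [MonoidHom.mem_ker, map_mul, map_inv, hs, mul_inv_cancel]
    rw [← wlpPhi_range hW s hs] at hmem
    obtain ⟨f, hf⟩ := hmem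
    refine ⟨⟨f, ε w⟩, ?_⟩
    rw [hΨ]
    show wlpPhi hW s hs f * s (ε w) = w
    rw [hf]
    group
  exact ⟨(MulEquiv.ofBijective Ψ ⟨hinj, hsurj⟩).symm⟩
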